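/- Core-tail decomposition: Let $\bar v_i(t_i, \cdot)$ be monotone, subadditive, nonnegative set functions with no externalities, and $\bar v_{ij}(t_{ij}) = \bar v_i(t_i, \{j\})$. Let $\tau_i \ge 0$ and $C_i(t_i) = \{j : \bar v_{ij}(t_{ij}) \le \tau_i\}$. For each $i$ and $t_i$, let $j(t_i)$ be the index of the region containing $t_i$ (each $t_i$ assigned to exactly one $j$, where $t_i \in R_{ij}$ implies $\bar v_{ij}(t_{ij}) \ge \bar v_{ik}(t_{ik})$ for all $k$). Then $\sum_i \mathbb{E}_{t_i}[\bar v_i(t_i, [m] \setminus \{j(t_i)\})] \le \sum_i \mathbb{E}_{t_i}[\bar v_i(t_i, C_i(t_i))] + \sum_i \sum_k \mathbb{E}_{t_{ik}}\big[\mathbf{1}[\bar v_{ik}(t_{ik}) > \tau_i] \cdot \bar v_{ik}(t_{ik}) \cdot \Pr_{t_{i,-k}}[\exists\, k' \ne k:\ \bar v_{ik'}(t_{ik'}) \ge \bar v_{ik}(t_{ik})]\big]$. -/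

import Mathlib

open scoped Classical
open Finset

lemma pi_sum_one {ι : Type*} [Fintype ι] [DecidableEq ι] (T : ι → Type*) [∀ j, Fintype (T j)]
    (w : ∀ j, T j → ℝ) (hw1 : ∀ j, ∑ x, w j x = 1) :
    ∑ t : ∀ j, T j, ∏ j, w j (t j) = 1 := by
  rw [← Fintype.prod_sum]; simp [hw1]

lemma key_lemma {m : ℕ} (T : Fin m → Type) [∀ j, Fintype (T j)]
    (w : ∀ j, T j → ℝ) (v : (∀ j, T j) → Finset (Fin m) → ℝ)
    (τ : ℝ) (jmap : (∀ j, T j) → Fin m)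
    (hw0 : ∀ j x, 0 ≤ w j x) (hw1 : ∀ j, ∑ x : T j, w j x = 1)
    (hτ : 0 ≤ τ) (hne : ∀ j, Nonempty (T j))
    (hnoext : ∀ t t' S, (∀ j ∈ S, t j = t' j) → v t S = v t' S)
    (hfav : ∀ t k, v t {k} ≤ v t {jmap t}) (k : Fin m) :
    ∑ t : ∀ j, T j, (∏ j, w j (t j)) *
      (if τ < v t {k} ∧ k ≠ jmap t then v t {k} else 0)
    ≤ ∑ t : ∀ j, T j, (∏ j, w j (t j)) *
      (if τ < v t {k} then v t {k} *
        (∑ t' : ∀ j, T j, (∏ j, w j (t' j)) *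
          (if ∃ k' ∈ Finset.univ.erase k, v t {k} ≤ v t' {k'} then 1 else 0))
      else 0) := by
  haveI : ∀ j : {j // j ≠ k}, Nonempty (T j) := fun j => hne j
  set e := Equiv.piSplitAt k T with he
  set σ : T k → (∀ j : {j : Fin m // j ≠ k}, T j) → (∀ j, T j) :=
    fun x r => e.symm (x, r) with hσ
  have hσk : ∀ x r, σ x r k = x := by intro x r; simp [hσ, he, Equiv.piSplitAt]
  have hσj : ∀ x r j (h : j ≠ k), σ x r j = r ⟨j, h⟩ := by
    intro x r j h; simp [hσ, he, Equiv.piSplitAt, h]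
  set W' : (∀ j : {j : Fin m // j ≠ k}, T j) → ℝ := fun r => ∏ j : {j : Fin m // j ≠ k}, w j.1 (r j) with hW'
  have hW'0 : ∀ r, 0 ≤ W' r := fun r => Finset.prod_nonneg fun j _ => hw0 _ _
  have hW'1 : ∑ r, W' r = 1 := pi_sum_one (fun j : {j : Fin m // j ≠ k} => T j)
    (fun j => w j.1) (fun j => hw1 j.1)
  have hprod : ∀ x r, (∏ j, w j (σ x r j)) = w k x * W' r := by
    intro x r
    rw [← Finset.mul_prod_erase _ _ (Finset.mem_univ k), hσk]
    congr 1
    rw [Finset.prod_subtype (p := fun j => j ≠ k) (Finset.univ.erase k)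
      (fun j => by simp [Finset.mem_erase]) (fun j => w j (σ x r j))]
    exact Finset.prod_congr rfl fun j _ => by rw [hσj x r j.1 j.2]
  set r₀ : ∀ j : {j : Fin m // j ≠ k}, T j := Classical.arbitrary _ with hr₀
  set f : T k → ℝ := fun x => v (σ x r₀) {k} with hfdef
  have hf : ∀ x r, v (σ x r) {k} = f x := by
    intro x r
    exact hnoext _ _ _ (by intro j hj; simp at hj; subst hj; rw [hσk, hσk])
  have hvk' : ∀ x x' r (k' : Fin m) (h : k' ≠ k), v (σ x r) {k'} = v (σ x' r) {k'} := by
    intro x x' r k' h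
    exact hnoext _ _ _ (by intro j hj; simp at hj; subst hj; rw [hσj _ _ _ h, hσj _ _ _ h])
  -- indicator depending only on (x, r)
  set χ : T k → (∀ j : {j : Fin m // j ≠ k}, T j) → ℝ := fun x s =>
    if ∃ k' ∈ Finset.univ.erase k, f x ≤ v (σ x s) {k'} then 1 else 0 with hχ
  set Q : T k → ℝ := fun x => ∑ s, W' s * χ x s with hQ
  have hχ0 : ∀ x s, 0 ≤ χ x s := by
    intro x s; simp only [hχ]; split <;> norm_num
  -- inner sum equals Q x
  have hinner : ∀ x, (∑ t' : ∀ j, T j, (∏ j, w j (t' j)) *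
      (if ∃ k' ∈ Finset.univ.erase k, f x ≤ v t' {k'} then 1 else 0)) = Q x := by
    intro x
    rw [← Equiv.sum_comp e.symm, Fintype.sum_prod_type]
    have : ∀ (y : T k) (s), (∏ j, w j (e.symm (y, s) j)) *
        (if ∃ k' ∈ Finset.univ.erase k, f x ≤ v (e.symm (y, s)) {k'} then 1 else 0)
        = w k y * (W' s * χ x s) := by
      intro y s
      have h1 : (∏ j, w j (e.symm (y, s) j)) = w k y * W' s := hprod y s
      have h2 : (if ∃ k' ∈ Finset.univ.erase k, f x ≤ v (e.symm (y, s)) {k'} then 1 else 0) = χ x s := by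
        simp only [hχ, hf]
        congr 1
        apply propext
        constructor
        · rintro ⟨k', hk', hle⟩
          exact ⟨k', hk', by rwa [show v (σ y s) {k'} = v (σ x s) {k'} from
            hvk' y x s k' (Finset.mem_erase.1 hk').1] at hle⟩
        · rintro ⟨k', hk', hle⟩
          exact ⟨k', hk', by rwa [show v (σ x s) {k'} = v (σ y s) {k'} from
            hvk' x y s k' (Finset.mem_erase.1 hk').1] at hle⟩
      rw [h1, h2]; ring
    simp_rw [this]
    rw [← Finset.sum_mul_sum]
    · simp [hw1 k, hQ]
  -- transport both sides
  rw [← Equiv.sum_comp e.symm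
    (fun t => (∏ j, w j (t j)) * (if τ < v t {k} ∧ k ≠ jmap t then v t {k} else 0)),
    ← Equiv.sum_comp e.symm
    (fun t => (∏ j, w j (t j)) * (if τ < v t {k} then v t {k} *
        (∑ t' : ∀ j, T j, (∏ j, w j (t' j)) *
          (if ∃ k' ∈ Finset.univ.erase k, v t {k} ≤ v t' {k'} then 1 else 0)) else 0)),
    Fintype.sum_prod_type, Fintype.sum_prod_type]
  apply Finset.sum_le_sum
  intro x _
  by_cases hc : τ < f x
  · have hstep1 : ∀ r, (∏ j, w j (e.symm (x, r) j)) *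
        (if τ < v (e.symm (x, r)) {k} ∧ k ≠ jmap (e.symm (x, r)) then v (e.symm (x, r)) {k} else 0)
        ≤ (w k x * W' r) * (f x * χ x r) := by
      intro r
      rw [hprod x r, hf x r]
      apply mul_le_mul_of_nonneg_left _ (mul_nonneg (hw0 _ _) (hW'0 r))
      by_cases hj : k ≠ jmap (e.symm (x, r))
      · have hχ1 : χ x r = 1 := by
          simp only [hχ]
          rw [if_pos]
          exact ⟨jmap (e.symm (x, r)), Finset.mem_erase.2 ⟨Ne.symm hj, Finset.mem_univ _⟩,
            by rw [← hf x r]; exact hfav _ k⟩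
        rw [if_pos ⟨hc, hj⟩, hχ1, mul_one]
      · rw [if_neg (by tauto)]
        exact mul_nonneg (le_trans hτ hc.le) (hχ0 x r)
    calc ∑ r, (∏ j, w j (e.symm (x, r) j)) *
          (if τ < v (e.symm (x, r)) {k} ∧ k ≠ jmap (e.symm (x, r)) then v (e.symm (x, r)) {k} else 0)
        ≤ ∑ r, (w k x * W' r) * (f x * χ x r) := Finset.sum_le_sum fun r _ => hstep1 r
      _ = w k x * f x * Q x := by
          rw [hQ]; simp only; rw [Finset.mul_sum]; apply Finset.sum_congr rfl; intro r _; ring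
      _ = ∑ r, (∏ j, w j (e.symm (x, r) j)) *
          (if τ < v (e.symm (x, r)) {k} then v (e.symm (x, r)) {k} *
            (∑ t' : ∀ j, T j, (∏ j, w j (t' j)) *
              (if ∃ k' ∈ Finset.univ.erase k, v (e.symm (x, r)) {k} ≤ v t' {k'} then 1 else 0)) else 0) := by
          have : ∀ r, (∏ j, w j (e.symm (x, r) j)) *
              (if τ < v (e.symm (x, r)) {k} then v (e.symm (x, r)) {k} *
                (∑ t' : ∀ j, T j, (∏ j, w j (t' j)) *
                  (if ∃ k' ∈ Finset.univ.erase k, v (e.symm (x, r)) {k} ≤ v t' {k'} then 1 else 0)) else 0)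
              = (w k x * f x * Q x) * W' r := by
            intro r
            rw [hprod x r, hf x r, if_pos hc, hinner x]; ring
          simp_rw [this]
          rw [← Finset.mul_sum, hW'1, mul_one]
  · have hz : ∀ r, (∏ j, w j (e.symm (x, r) j)) *
        (if τ < v (e.symm (x, r)) {k} ∧ k ≠ jmap (e.symm (x, r)) then v (e.symm (x, r)) {k} else 0)
        = 0 := by
      intro r; rw [hf x r, if_neg (by tauto), mul_zero]
    have hz' : ∀ r, (∏ j, w j (e.symm (x, r) j)) *
        (if τ < v (e.symm (x, r)) {k} then v (e.symm (x, r)) {k} *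
          (∑ t' : ∀ j, T j, (∏ j, w j (t' j)) *
            (if ∃ k' ∈ Finset.univ.erase k, v (e.symm (x, r)) {k} ≤ v t' {k'} then 1 else 0)) else 0)
        = 0 := by
      intro r; rw [hf x r, if_neg hc, mul_zero]
    simp_rw [hz, hz']
    simp

/-- core-tail decomposition: for each buyer `i`, the type has
independent coordinates (modelled by a product of finite probability spaces);
`v i t ·` is monotone, subadditive, nonnegative and has no externalities;
`jmap i t` is the region (favorite coordinate) of `t`, so that
`v i t {k} ≤ v i t {jmap i t}` for all `k`.  Then the expected non-favorite
value is at most the core term plus the tail term. -/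
theorem stmt_15 (n m : ℕ) (T : Fin n → Fin m → Type)
    [∀ i j, Fintype (T i j)]
    (w : ∀ i j, T i j → ℝ)
    (v : ∀ i, (∀ j, T i j) → Finset (Fin m) → ℝ)
    (τ : Fin n → ℝ) (jmap : ∀ i, (∀ j, T i j) → Fin m)
    (hw0 : ∀ i j x, 0 ≤ w i j x) (hw1 : ∀ i j, ∑ x : T i j, w i j x = 1)
    (hτ : ∀ i, 0 ≤ τ i)
    (hmono : ∀ i t U V, U ⊆ V → v i t U ≤ v i t V)
    (hsub : ∀ i t U V, v i t (U ∪ V) ≤ v i t U + v i t V)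
    (hnonneg : ∀ i t S, 0 ≤ v i t S)
    (hnoext : ∀ i (t t' : ∀ j, T i j) (S : Finset (Fin m)),
      (∀ j ∈ S, t j = t' j) → v i t S = v i t' S)
    (hfav : ∀ i t k, v i t {k} ≤ v i t {jmap i t}) :
    ∑ i, ∑ t : ∀ j, T i j, (∏ j, w i j (t j)) *
        v i t (Finset.univ \ {jmap i t})
      ≤ (∑ i, ∑ t : ∀ j, T i j, (∏ j, w i j (t j)) *
            v i t (Finset.univ.filter (fun j => v i t {j} ≤ τ i)))
        + ∑ i, ∑ k, ∑ t : ∀ j, T i j, (∏ j, w i j (t j)) *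
            (if τ i < v i t {k} then
              v i t {k} *
                (∑ t' : ∀ j, T i j, (∏ j, w i j (t' j)) *
                  (if ∃ k' ∈ Finset.univ.erase k, v i t {k} ≤ v i t' {k'}
                    then 1 else 0))
            else 0) := by
  classical
  have hne : ∀ i j, Nonempty (T i j) := by
    intro i j
    by_contra h
    rw [not_nonempty_iff] at h
    have h1 := hw1 i j
    rw [Finset.univ_eq_empty, Finset.sum_empty] at h1
    norm_num at h1
  have hsingles : ∀ i (t : ∀ j, T i j) (A S : Finset (Fin m)),
      v i t (A ∪ S) ≤ v i t A + ∑ kk ∈ S, v i t {kk} := by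
    intro i t A S
    induction S using Finset.induction_on with
    | empty => simp
    | @insert kk S hkk ih =>
      calc v i t (A ∪ insert kk S) = v i t ((A ∪ S) ∪ {kk}) := by
            congr 1; ext j; simp [Finset.mem_insert, or_comm, or_left_comm, or_assoc]
        _ ≤ v i t (A ∪ S) + v i t {kk} := hsub i t _ _
        _ ≤ (v i t A + ∑ x ∈ S, v i t {x}) + v i t {kk} := by linarith
        _ = v i t A + ∑ x ∈ insert kk S, v i t {x} := by
            rw [Finset.sum_insert hkk]; ring
  rw [← Finset.sum_add_distrib]
  apply Finset.sum_le_sum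
  intro i _
  have hWt : ∀ t : ∀ j, T i j, 0 ≤ ∏ j, w i j (t j) :=
    fun t => Finset.prod_nonneg fun j _ => hw0 i j _
  have step1 : ∀ t : ∀ j, T i j,
      v i t (Finset.univ \ {jmap i t}) ≤
      v i t (Finset.univ.filter (fun j => v i t {j} ≤ τ i)) +
      ∑ kk, (if τ i < v i t {kk} ∧ kk ≠ jmap i t then v i t {kk} else 0) := by
    intro t
    set C := Finset.univ.filter (fun j => v i t {j} ≤ τ i) with hC
    set S := (Finset.univ \ {jmap i t}) \ C with hS
    have h1 : Finset.univ \ {jmap i t} ⊆ C ∪ S := by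
      intro kk hkk
      by_cases h : kk ∈ C
      · exact Finset.mem_union_left _ h
      · exact Finset.mem_union_right _ (Finset.mem_sdiff.2 ⟨hkk, h⟩)
    refine ((hmono i t _ _ h1).trans (hsingles i t C S)).trans (add_le_add (le_refl _) ?_)
    have hSeq : S = Finset.univ.filter (fun kk => τ i < v i t {kk} ∧ kk ≠ jmap i t) := by
      ext kk
      simp only [hS, hC, Finset.mem_sdiff, Finset.mem_filter, Finset.mem_univ, true_and,
        Finset.mem_singleton, not_le]
      tauto
    rw [hSeq, Finset.sum_filter]
  calc ∑ t : ∀ j, T i j, (∏ j, w i j (t j)) * v i t (Finset.univ \ {jmap i t})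
      ≤ ∑ t : ∀ j, T i j, (∏ j, w i j (t j)) *
          (v i t (Finset.univ.filter (fun j => v i t {j} ≤ τ i)) +
           ∑ kk, (if τ i < v i t {kk} ∧ kk ≠ jmap i t then v i t {kk} else 0)) :=
        Finset.sum_le_sum fun t _ => mul_le_mul_of_nonneg_left (step1 t) (hWt t)
    _ = (∑ t : ∀ j, T i j, (∏ j, w i j (t j)) *
          v i t (Finset.univ.filter (fun j => v i t {j} ≤ τ i)))
        + ∑ kk, ∑ t : ∀ j, T i j, (∏ j, w i j (t j)) *
            (if τ i < v i t {kk} ∧ kk ≠ jmap i t then v i t {kk} else 0) := by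
        simp_rw [mul_add, Finset.mul_sum]
        rw [Finset.sum_add_distrib]
        congr 1
        rw [Finset.sum_comm]
    _ ≤ (∑ t : ∀ j, T i j, (∏ j, w i j (t j)) *
          v i t (Finset.univ.filter (fun j => v i t {j} ≤ τ i)))
        + ∑ kk, ∑ t : ∀ j, T i j, (∏ j, w i j (t j)) *
            (if τ i < v i t {kk} then
              v i t {kk} *
                (∑ t' : ∀ j, T i j, (∏ j, w i j (t' j)) *
                  (if ∃ k' ∈ Finset.univ.erase kk, v i t {kk} ≤ v i t' {k'}
                    then 1 else 0))
            else 0) := by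
        apply add_le_add (le_refl _)
        apply Finset.sum_le_sum
        intro kk _
        exact key_lemma (T i) (w i) (v i) (τ i) (jmap i) (hw0 i) (hw1 i) (hτ i)
          (hne i) (fun t t' S h => hnoext i t t' S h) (hfav i) kk
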